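/- Over the real numbers, the following family of sequences in ℕ → ℝ is linearly independent over ℝ: (a) the delta sequences δ_n for n ∈ ℕ, where δ_n(k) = 1 if k = n and 0 otherwise; (b) the sequences k ↦ k^i·ρ^k for each nonzero real ρ and each i ∈ ℕ; (c) the sequences k ↦ k^i·r^k·cos(kθ) for each real r > 0, each θ with 0 < θ < π, and each i ∈ ℕ; and (d) the sequences k ↦ k^i·r^k·sin(kθ) for each real r > 0, each θ with 0 < θ < π, and each i ∈ ℕ. -/

import Mathlib

open Polynomial Finset

/-- A polynomial over ℂ vanishing at all naturals ≥ N is zero. -/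
lemma poly_zero_of_eval_nat (p : Polynomial ℂ) (N : ℕ)
    (h : ∀ k : ℕ, N ≤ k → p.eval (k : ℂ) = 0) : p = 0 := by
  apply p.eq_zero_of_infinite_isRoot
  apply Set.Infinite.mono (s := (fun k : ℕ => (k : ℂ)) '' Set.Ici N)
  · rintro x ⟨k, hk, rfl⟩; exact h k hk
  · exact (Set.Ici_infinite N).image (Set.injOn_of_injective Nat.cast_injective)

lemma comp_deg (p : Polynomial ℂ) : (p.comp (X + C 1)).natDegree = p.natDegree := by
  rw [natDegree_comp, natDegree_X_add_C, mul_one]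

lemma comp_lead (p : Polynomial ℂ) :
    (p.comp (X + C 1)).coeff p.natDegree = p.leadingCoeff := by
  have h := Polynomial.leadingCoeff_comp (p := p) (q := X + C 1)
    (by rw [natDegree_X_add_C]; exact one_ne_zero)
  rw [(monic_X_add_C (1:ℂ)).leadingCoeff, one_pow, mul_one] at h
  calc (p.comp (X + C 1)).coeff p.natDegree
      = (p.comp (X + C 1)).coeff ((p.comp (X + C 1)).natDegree) := by rw [comp_deg]
    _ = p.leadingCoeff := h

/-- degree of `p.comp (X+1) - p` is smaller. -/
lemma natDegree_comp_sub_lt (p : Polynomial ℂ) (hp : p ≠ 0)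
    (hne : p.comp (X + C 1) - p ≠ 0) :
    (p.comp (X + C 1) - p).natDegree < p.natDegree := by
  have hle : (p.comp (X + C 1) - p).natDegree ≤ p.natDegree := by
    refine (natDegree_sub_le _ _).trans ?_
    rw [comp_deg, max_self]
  have hcoeff : (p.comp (X + C 1) - p).coeff p.natDegree = 0 := by
    rw [coeff_sub, comp_lead, Polynomial.coeff_natDegree, sub_self]
  rcases lt_or_eq_of_le hle with h | h
  · exact h
  · exfalso
    apply hne
    have : (p.comp (X + C 1) - p).leadingCoeff = 0 := by
      rw [Polynomial.leadingCoeff, h, hcoeff]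
    exact leadingCoeff_eq_zero.mp this

/-- measure of a polynomial -/
noncomputable def pdeg (p : Polynomial ℂ) : ℕ := if p = 0 then 0 else p.natDegree + 1

/-- Key lemma: exponential polynomials with distinct nonzero bases vanishing eventually
have zero polynomial coefficients. -/
lemma key (m : ℕ) : ∀ {ι : Type} (s : Finset ι) (z : ι → ℂ) (p : ι → Polynomial ℂ) (N : ℕ),
    (∀ i ∈ s, z i ≠ 0) → (Set.InjOn z s) →
    (∑ i ∈ s, pdeg (p i)) ≤ m →
    (∀ k : ℕ, N ≤ k → ∑ i ∈ s, (p i).eval (k : ℂ) * z i ^ k = 0) →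
    ∀ i ∈ s, p i = 0 := by
  induction m with
  | zero =>
    intro ι s z p N hz hinj hm hsum i hi
    have := Finset.sum_eq_zero_iff_of_nonneg (fun i _ => Nat.zero_le _) |>.mp
      (Nat.le_zero.mp hm) i hi
    by_contra hne
    simp [pdeg, hne] at this
  | succ m ih =>
    intro ι s z p N hz hinj hm hsum i hi
    classical
    by_cases hall : ∀ j ∈ s, p j = 0
    · exact hall i hi
    push_neg at hall
    obtain ⟨i0, hi0, hpi0⟩ := hall
    -- transformed system
    set q : ι → Polynomial ℂ := fun j => C (z j) * (p j).comp (X + C 1) - C (z i0) * p j with hq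
    have hqsum : ∀ k : ℕ, N ≤ k → ∑ j ∈ s, (q j).eval (k : ℂ) * z j ^ k = 0 := by
      intro k hk
      have h1 := hsum (k + 1) (by omega)
      have h2 := hsum k hk
      have : ∑ j ∈ s, (q j).eval (k : ℂ) * z j ^ k
          = (∑ j ∈ s, (p j).eval ((k+1 : ℕ) : ℂ) * z j ^ (k+1))
            - z i0 * ∑ j ∈ s, (p j).eval (k : ℂ) * z j ^ k := by
        rw [Finset.mul_sum, ← Finset.sum_sub_distrib]
        apply Finset.sum_congr rfl
        intro j hj
        simp only [hq, eval_sub, eval_mul, eval_C, eval_comp, eval_add, eval_X, eval_one]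
        push_cast
        ring
      rw [this, h1, h2]; ring
    -- measure bounds
    have hdegq : ∀ j, (q j).natDegree ≤ (p j).natDegree := by
      intro j
      refine (natDegree_sub_le _ _).trans (max_le ?_ ?_)
      · refine natDegree_C_mul_le _ _ |>.trans ?_
        rw [comp_deg]
      · exact natDegree_C_mul_le _ _
    have hqzero : ∀ j, p j = 0 → q j = 0 := by intro j h; simp [hq, h]
    have hpdegle : ∀ j, pdeg (q j) ≤ pdeg (p j) := by
      intro j
      by_cases h : p j = 0
      · simp [pdeg, hqzero j h, h]
      · by_cases h2 : q j = 0
        · simp [pdeg, h2]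
        · simp only [pdeg, if_neg h, if_neg h2]
          exact Nat.succ_le_succ (hdegq j)
    have hstrict : pdeg (q i0) < pdeg (p i0) := by
      have hqi0 : q i0 = C (z i0) * ((p i0).comp (X + C 1) - p i0) := by
        rw [hq]; ring
      by_cases h2 : (p i0).comp (X + C 1) - p i0 = 0
      · have : q i0 = 0 := by rw [hqi0, h2, mul_zero]
        simp [pdeg, this, hpi0]
      · have hz0 : z i0 ≠ 0 := hz i0 hi0
        have hqne : q i0 ≠ 0 := by
          rw [hqi0]
          exact mul_ne_zero (by simpa using hz0) h2
        simp only [pdeg, if_neg hqne, if_neg hpi0]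
        have : (q i0).natDegree = ((p i0).comp (X + C 1) - p i0).natDegree := by
          rw [hqi0, natDegree_C_mul hz0]
        rw [this]
        exact Nat.succ_lt_succ (natDegree_comp_sub_lt (p i0) hpi0 h2)
    have hmq : (∑ j ∈ s, pdeg (q j)) ≤ m := by
      have h1 : ∑ j ∈ s, pdeg (q j) < ∑ j ∈ s, pdeg (p j) :=
        Finset.sum_lt_sum (fun j _ => hpdegle j) ⟨i0, hi0, hstrict⟩
      omega
    have hqall : ∀ j ∈ s, q j = 0 := ih s z q N hz hinj hmq hqsum
    -- for j ≠ i0, p j = 0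
    have hpj : ∀ j ∈ s, j ≠ i0 → p j = 0 := by
      intro j hj hne
      by_contra hpj
      have hzne : z j ≠ z i0 := fun h => hne (hinj hj hi0 h)
      have hcoeff : (q j).coeff (p j).natDegree = (z j - z i0) * (p j).leadingCoeff := by
        show (C (z j) * (p j).comp (X + C 1) - C (z i0) * p j).coeff (p j).natDegree = _
        rw [coeff_sub, coeff_C_mul, coeff_C_mul, comp_lead, Polynomial.coeff_natDegree]
        ring
      rw [hqall j hj] at hcoeff
      simp only [coeff_zero] at hcoeff
      rcases mul_eq_zero.mp hcoeff.symm with h | h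
      · exact hzne (sub_eq_zero.mp h)
      · exact hpj (leadingCoeff_eq_zero.mp h)
    -- now p i0 vanishes at all large naturals
    have hpi0zero : p i0 = 0 := by
      apply poly_zero_of_eval_nat (p i0) N
      intro k hk
      have := hsum k hk
      rw [Finset.sum_eq_single i0] at this
      · have hzk : z i0 ^ k ≠ 0 := pow_ne_zero _ (hz i0 hi0)
        exact (mul_eq_zero.mp this).resolve_right hzk
      · intro j hj hne
        rw [hpj j hj hne]; simp
      · intro h; exact absurd hi0 h
    by_cases h : i = i0
    · rw [h]; exact hpi0zero
    · exact hpj i hi h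

noncomputable section RecBasisAux

abbrev Aty := {r : ℝ // 0 < r} × {θ : ℝ // 0 < θ ∧ θ < Real.pi}
abbrev Bsub := {ρ : ℝ // ρ ≠ 0}

/-- sum over a finset of a sum type -/
lemma sum_toLR {α β M : Type*} [AddCommMonoid M] (s : Finset (α ⊕ β)) (f : α ⊕ β → M) :
    ∑ i ∈ s, f i = ∑ x ∈ s.toLeft, f (Sum.inl x) + ∑ x ∈ s.toRight, f (Sum.inr x) := by
  conv_lhs => rw [← Finset.toLeft_disjSum_toRight (u := s)]
  rw [Finset.sum_disjSum]

def zc1 (t : Aty) : ℂ := ((t.1 : ℝ) : ℂ) * Complex.exp (((t.2 : ℝ) : ℂ) * Complex.I)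
def zc2 (t : Aty) : ℂ := ((t.1 : ℝ) : ℂ) * Complex.exp (-((t.2 : ℝ) : ℂ) * Complex.I)
def zcB (ρ : Bsub) : ℂ := ((ρ : ℝ) : ℂ)
def zc : Bsub ⊕ (Aty ⊕ Aty) → ℂ := Sum.elim zcB (Sum.elim zc1 zc2)

lemma zc2_eq_conj (t : Aty) : zc2 t = (starRingEnd ℂ) (zc1 t) := by
  simp only [zc1, zc2, map_mul, Complex.conj_ofReal, ← Complex.exp_conj]
  congr 2
  simp

lemma zc1_im (t : Aty) : (zc1 t).im = (t.1 : ℝ) * Real.sin (t.2 : ℝ) := by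
  simp [zc1, Complex.exp_mul_I, ← Complex.ofReal_cos, ← Complex.ofReal_sin,
    Complex.mul_im]

lemma zc1_im_pos (t : Aty) : 0 < (zc1 t).im := by
  rw [zc1_im]
  exact mul_pos t.1.2 (Real.sin_pos_of_pos_of_lt_pi t.2.2.1 t.2.2.2)

lemma zc2_im_neg (t : Aty) : (zc2 t).im < 0 := by
  rw [zc2_eq_conj]
  simpa using zc1_im_pos t

lemma zc1_ne_zero (t : Aty) : zc1 t ≠ 0 :=
  mul_ne_zero (by exact_mod_cast ne_of_gt t.1.2) (Complex.exp_ne_zero _)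

lemma zc2_ne_zero (t : Aty) : zc2 t ≠ 0 := by
  rw [zc2_eq_conj]; simpa using zc1_ne_zero t

lemma zc_ne_zero (j) : zc j ≠ 0 := by
  rcases j with ρ | (t | t)
  · simpa [zc, zcB] using ρ.2
  · exact zc1_ne_zero t
  · exact zc2_ne_zero t

lemma zc1_arg (t : Aty) : (zc1 t).arg = (t.2 : ℝ) := by
  rw [zc1, Complex.exp_mul_I]
  exact Complex.arg_mul_cos_add_sin_mul_I t.1.2
    ⟨by linarith [Real.pi_pos, t.2.2.1], le_of_lt t.2.2.2⟩

lemma zc1_inj : Function.Injective zc1 := by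
  intro t t' h
  have harg : (t.2 : ℝ) = (t'.2 : ℝ) := by rw [← zc1_arg t, ← zc1_arg t', h]
  have hr : (t.1 : ℝ) = (t'.1 : ℝ) := by
    have := congrArg (fun z : ℂ => ‖z‖) h
    simp only [zc1, norm_mul, Complex.norm_real, Real.norm_eq_abs, Complex.norm_exp_ofReal_mul_I, mul_one] at this
    rwa [abs_of_pos t.1.2, abs_of_pos t'.1.2] at this
  exact Prod.ext (Subtype.ext hr) (Subtype.ext harg)

lemma zc2_inj : Function.Injective zc2 := by
  intro t t' h
  apply zc1_inj
  have : (starRingEnd ℂ) (zc1 t) = (starRingEnd ℂ) (zc1 t') := by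
    rw [← zc2_eq_conj, ← zc2_eq_conj, h]
  exact (starRingEnd ℂ).injective this

lemma zc_inj : Function.Injective zc := by
  intro j1 j2 h
  have him1 : ∀ ρ : Bsub, (zcB ρ).im = 0 := fun ρ => by simp [zcB]
  rcases j1 with ρ | (t | t) <;> rcases j2 with ρ' | (t' | t') <;>
    simp only [zc, Sum.elim_inl, Sum.elim_inr] at h <;>
    [skip; skip; skip; skip; skip; skip; skip; skip; skip]
  · exact congrArg Sum.inl (Subtype.ext (by exact_mod_cast congrArg Complex.re h))
  · exfalso; have := congrArg Complex.im h; rw [him1] at this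
    linarith [zc1_im_pos t']
  · exfalso; have := congrArg Complex.im h; rw [him1] at this
    linarith [zc2_im_neg t']
  · exfalso; have := congrArg Complex.im h; rw [him1] at this
    linarith [zc1_im_pos t]
  · exact congrArg (Sum.inr ∘ Sum.inl) (zc1_inj h)
  · exfalso; have := congrArg Complex.im h
    linarith [zc1_im_pos t, zc2_im_neg t']
  · exfalso; have := congrArg Complex.im h; rw [him1] at this
    linarith [zc2_im_neg t]
  · exfalso; have := congrArg Complex.im h
    linarith [zc2_im_neg t, zc1_im_pos t']
  · exact congrArg (Sum.inr ∘ Sum.inr) (zc2_inj h)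

lemma combine (r θ a b : ℝ) (i k : ℕ) :
    ((a : ℂ) - b * Complex.I)/2 * (k : ℂ)^i * ((r : ℂ) * Complex.exp ((θ : ℂ) * Complex.I))^k
      + ((a : ℂ) + b * Complex.I)/2 * (k : ℂ)^i * ((r : ℂ) * Complex.exp (-(θ : ℂ) * Complex.I))^k
    = ((a * ((k:ℝ)^i * r^k * Real.cos (k*θ)) + b * ((k:ℝ)^i * r^k * Real.sin (k*θ)) : ℝ) : ℂ) := by
  have e1 : ((r : ℂ) * Complex.exp ((θ : ℂ) * Complex.I))^k
      = (r : ℂ)^k * (((Real.cos (k*θ) : ℝ) : ℂ) + ((Real.sin (k*θ) : ℝ) : ℂ) * Complex.I) := by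
    rw [mul_pow, ← Complex.exp_nat_mul]
    congr 1
    have h : (k : ℂ) * ((θ : ℂ) * Complex.I) = ((k*θ : ℝ) : ℂ) * Complex.I := by push_cast; ring
    rw [h, Complex.exp_mul_I, Complex.ofReal_cos, Complex.ofReal_sin]
  have e2 : ((r : ℂ) * Complex.exp (-(θ : ℂ) * Complex.I))^k
      = (r : ℂ)^k * (((Real.cos (k*θ) : ℝ) : ℂ) - ((Real.sin (k*θ) : ℝ) : ℂ) * Complex.I) := by
    rw [mul_pow, ← Complex.exp_nat_mul]
    congr 1
    have h : (k : ℂ) * (-(θ : ℂ) * Complex.I) = ((-(k*θ) : ℝ) : ℂ) * Complex.I := by push_cast; ring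
    rw [h, Complex.exp_mul_I, ← Complex.ofReal_cos, ← Complex.ofReal_sin, Real.cos_neg, Real.sin_neg]
    push_cast
    ring
  rw [e1, e2]
  push_cast [-Complex.ofReal_cos, -Complex.ofReal_sin]
  linear_combination (-(b : ℂ) * (Real.sin (k*θ) : ℝ) * (k : ℂ)^i * (r : ℂ)^k) * Complex.I_sq

/-- coefficient extraction from a sum of monomials indexed by pairs -/
lemma extract {α : Type*} [DecidableEq α] (t : Finset (α × ℕ)) (w : α × ℕ → ℂ) (x : α × ℕ)
    (hx : x ∈ t) (hall : ∀ c ∈ t, c.1 = x.1)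
    (h : ∑ c ∈ t, C (w c) * X ^ c.2 = 0) : w x = 0 := by
  have h2 := congrArg (fun p => Polynomial.coeff p x.2) h
  simp only [Polynomial.finset_sum_coeff, Polynomial.coeff_C_mul, Polynomial.coeff_X_pow,
    Polynomial.coeff_zero] at h2
  rw [Finset.sum_eq_single x] at h2
  · simpa using h2
  · intro c hc hne
    have h3 : ¬ (x.2 = c.2) := fun h4 => hne (Prod.ext (hall c hc) h4.symm)
    simp [h3]
  · intro hxx; exact absurd hx hxx


theorem aux_main (s : Finset (ℕ ⊕ (Bsub × ℕ ⊕ (Aty × ℕ ⊕ Aty × ℕ))))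
    (g : (ℕ ⊕ (Bsub × ℕ ⊕ (Aty × ℕ ⊕ Aty × ℕ))) → ℝ)
    (hsum : ∑ i ∈ s, g i •
      (Sum.elim
        (fun nn : ℕ => fun k : ℕ => if k = nn then (1 : ℝ) else 0)
        (Sum.elim
          (fun q : Bsub × ℕ => fun k : ℕ => (k : ℝ) ^ q.2 * (q.1 : ℝ) ^ k)
          (Sum.elim
            (fun q : Aty × ℕ => fun k : ℕ =>
              (k : ℝ) ^ q.2 * (q.1.1 : ℝ) ^ k * Real.cos (k * (q.1.2 : ℝ)))
            (fun q : Aty × ℕ => fun k : ℕ =>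
              (k : ℝ) ^ q.2 * (q.1.1 : ℝ) ^ k * Real.sin (k * (q.1.2 : ℝ))))) i) = 0) :
    ∀ i ∈ s, g i = 0 := by
  classical
  have h0 : ∀ k : ℕ,
      (∑ n ∈ s.toLeft, g (Sum.inl n) * (if k = n then (1:ℝ) else 0))
      + ((∑ x ∈ s.toRight.toLeft, g (Sum.inr (Sum.inl x)) * ((k:ℝ)^x.2 * (x.1:ℝ)^k))
      + ((∑ c ∈ s.toRight.toRight.toLeft, g (Sum.inr (Sum.inr (Sum.inl c))) *
            ((k:ℝ)^c.2 * (c.1.1:ℝ)^k * Real.cos (k * (c.1.2:ℝ))))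
      + (∑ c ∈ s.toRight.toRight.toRight, g (Sum.inr (Sum.inr (Sum.inr c))) *
            ((k:ℝ)^c.2 * (c.1.1:ℝ)^k * Real.sin (k * (c.1.2:ℝ)))))) = 0 := by
    intro k
    have h1 := congrFun hsum k
    simp only [Finset.sum_apply, Pi.smul_apply, smul_eq_mul, Pi.zero_apply] at h1
    rw [sum_toLR, sum_toLR, sum_toLR] at h1
    simpa only [Sum.elim_inl, Sum.elim_inr] using h1
  -- extended coefficients on the union
  set U : Finset (Aty × ℕ) := s.toRight.toRight.toLeft ∪ s.toRight.toRight.toRight with hU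
  set a : Aty × ℕ → ℝ := fun c => if Sum.inr (Sum.inr (Sum.inl c)) ∈ s then
    g (Sum.inr (Sum.inr (Sum.inl c))) else 0 with ha
  set b : Aty × ℕ → ℝ := fun c => if Sum.inr (Sum.inr (Sum.inr c)) ∈ s then
    g (Sum.inr (Sum.inr (Sum.inr c))) else 0 with hb
  have hmem1 : ∀ c : Aty × ℕ, c ∈ s.toRight.toRight.toLeft ↔ Sum.inr (Sum.inr (Sum.inl c)) ∈ s := by
    intro c; simp [Finset.mem_toLeft, Finset.mem_toRight]
  have hmem2 : ∀ c : Aty × ℕ, c ∈ s.toRight.toRight.toRight ↔ Sum.inr (Sum.inr (Sum.inr c)) ∈ s := by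
    intro c; simp [Finset.mem_toRight]
  have hpt : ∀ k : ℕ,
      (∑ n ∈ s.toLeft, g (Sum.inl n) * (if k = n then (1:ℝ) else 0))
      + ((∑ x ∈ s.toRight.toLeft, g (Sum.inr (Sum.inl x)) * ((k:ℝ)^x.2 * (x.1:ℝ)^k))
      + ((∑ c ∈ U, a c * ((k:ℝ)^c.2 * (c.1.1:ℝ)^k * Real.cos (k * (c.1.2:ℝ))))
      + (∑ c ∈ U, b c * ((k:ℝ)^c.2 * (c.1.1:ℝ)^k * Real.sin (k * (c.1.2:ℝ)))))) = 0 := by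
    intro k
    have e1 : ∑ c ∈ s.toRight.toRight.toLeft, g (Sum.inr (Sum.inr (Sum.inl c))) *
          ((k:ℝ)^c.2 * (c.1.1:ℝ)^k * Real.cos (k * (c.1.2:ℝ)))
        = ∑ c ∈ U, a c * ((k:ℝ)^c.2 * (c.1.1:ℝ)^k * Real.cos (k * (c.1.2:ℝ))) := by
      rw [Finset.sum_congr rfl (fun c hc => by
        rw [ha]; simp only; rw [if_pos ((hmem1 c).mp hc)] :
          ∀ c ∈ s.toRight.toRight.toLeft, g (Sum.inr (Sum.inr (Sum.inl c))) *
            ((k:ℝ)^c.2 * (c.1.1:ℝ)^k * Real.cos (k * (c.1.2:ℝ)))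
          = a c * ((k:ℝ)^c.2 * (c.1.1:ℝ)^k * Real.cos (k * (c.1.2:ℝ))))]
      exact Finset.sum_subset Finset.subset_union_left (fun c _ hnc => by
        rw [ha]; simp only; rw [if_neg (fun hm => hnc ((hmem1 c).mpr hm)), zero_mul])
    have e2 : ∑ c ∈ s.toRight.toRight.toRight, g (Sum.inr (Sum.inr (Sum.inr c))) *
          ((k:ℝ)^c.2 * (c.1.1:ℝ)^k * Real.sin (k * (c.1.2:ℝ)))
        = ∑ c ∈ U, b c * ((k:ℝ)^c.2 * (c.1.1:ℝ)^k * Real.sin (k * (c.1.2:ℝ))) := by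
      rw [Finset.sum_congr rfl (fun c hc => by
        rw [hb]; simp only; rw [if_pos ((hmem2 c).mp hc)] :
          ∀ c ∈ s.toRight.toRight.toRight, g (Sum.inr (Sum.inr (Sum.inr c))) *
            ((k:ℝ)^c.2 * (c.1.1:ℝ)^k * Real.sin (k * (c.1.2:ℝ)))
          = b c * ((k:ℝ)^c.2 * (c.1.1:ℝ)^k * Real.sin (k * (c.1.2:ℝ))))]
      exact Finset.sum_subset Finset.subset_union_right (fun c _ hnc => by
        rw [hb]; simp only; rw [if_neg (fun hm => hnc ((hmem2 c).mpr hm)), zero_mul])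
    rw [← e1, ← e2]
    exact h0 k
  set N : ℕ := s.toLeft.sup id + 1 with hN
  have hF0 : ∀ k : ℕ, N ≤ k →
      (∑ x ∈ s.toRight.toLeft, g (Sum.inr (Sum.inl x)) * ((k:ℝ)^x.2 * (x.1:ℝ)^k))
      + ((∑ c ∈ U, a c * ((k:ℝ)^c.2 * (c.1.1:ℝ)^k * Real.cos (k * (c.1.2:ℝ))))
      + (∑ c ∈ U, b c * ((k:ℝ)^c.2 * (c.1.1:ℝ)^k * Real.sin (k * (c.1.2:ℝ))))) = 0 := by
    intro k hk
    have h1 := hpt k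
    have hδ : ∑ n ∈ s.toLeft, g (Sum.inl n) * (if k = n then (1:ℝ) else 0) = 0 := by
      apply Finset.sum_eq_zero
      intro n hn
      have : n ≤ s.toLeft.sup id := Finset.le_sup (f := id) hn
      have hkn : k ≠ n := by omega
      simp [hkn]
    rw [hδ, zero_add] at h1
    exact h1
  -- complex polynomials
  set pc : Bsub ⊕ (Aty ⊕ Aty) → Polynomial ℂ := Sum.elim
    (fun ρ => ∑ x ∈ s.toRight.toLeft.filter (fun x => x.1 = ρ),
      C ((g (Sum.inr (Sum.inl x)) : ℝ) : ℂ) * X ^ x.2)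
    (Sum.elim
      (fun t => ∑ c ∈ U.filter (fun c => c.1 = t),
        C ((((a c : ℝ) : ℂ) - ((b c : ℝ) : ℂ) * Complex.I)/2) * X ^ c.2)
      (fun t => ∑ c ∈ U.filter (fun c => c.1 = t),
        C ((((a c : ℝ) : ℂ) + ((b c : ℝ) : ℂ) * Complex.I)/2) * X ^ c.2)) with hpc
  set sJ : Finset (Bsub ⊕ (Aty ⊕ Aty)) :=
    (s.toRight.toLeft.image Prod.fst).disjSum
      ((U.image Prod.fst).disjSum (U.image Prod.fst)) with hsJ
  have hzsum : ∀ k : ℕ, N ≤ k → ∑ j ∈ sJ, (pc j).eval (k:ℂ) * zc j ^ k = 0 := by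
    intro k hk
    rw [hsJ, Finset.sum_disjSum, Finset.sum_disjSum]
    have hBp : ∑ ρ ∈ s.toRight.toLeft.image Prod.fst,
        (pc (Sum.inl ρ)).eval (k:ℂ) * zc (Sum.inl ρ) ^ k
        = ((∑ x ∈ s.toRight.toLeft, g (Sum.inr (Sum.inl x)) * ((k:ℝ)^x.2 * (x.1:ℝ)^k) : ℝ) : ℂ) := by
      rw [Complex.ofReal_sum,
        ← Finset.sum_fiberwise_of_maps_to (g := Prod.fst)
          (fun x hx => Finset.mem_image_of_mem _ hx)
          (fun x => ((g (Sum.inr (Sum.inl x)) * ((k:ℝ)^x.2 * (x.1:ℝ)^k) : ℝ) : ℂ))]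
      apply Finset.sum_congr rfl
      intro ρ hρ
      simp only [hpc, Sum.elim_inl, Polynomial.eval_finset_sum, eval_mul, eval_C, eval_pow, eval_X]
      rw [Finset.sum_mul]
      apply Finset.sum_congr rfl
      intro x hx
      have hx1 : x.1 = ρ := (Finset.mem_filter.mp hx).2
      rw [← hx1]
      simp only [zc, Sum.elim_inl, zcB]
      push_cast
      ring
    have hC1p : ∑ t ∈ U.image Prod.fst,
        (pc (Sum.inr (Sum.inl t))).eval (k:ℂ) * zc (Sum.inr (Sum.inl t)) ^ k
        = ∑ c ∈ U, (((a c : ℝ) : ℂ) - ((b c : ℝ) : ℂ) * Complex.I)/2 * (k:ℂ)^c.2 * zc1 c.1 ^ k := by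
      rw [← Finset.sum_fiberwise_of_maps_to (g := Prod.fst)
          (fun x hx => Finset.mem_image_of_mem _ hx)
          (fun c => (((a c : ℝ) : ℂ) - ((b c : ℝ) : ℂ) * Complex.I)/2 * (k:ℂ)^c.2 * zc1 c.1 ^ k)]
      apply Finset.sum_congr rfl
      intro t ht
      simp only [hpc, Sum.elim_inr, Sum.elim_inl, Polynomial.eval_finset_sum, eval_mul, eval_C,
        eval_pow, eval_X]
      rw [Finset.sum_mul]
      apply Finset.sum_congr rfl
      intro c hc
      have hc1 : c.1 = t := (Finset.mem_filter.mp hc).2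
      rw [← hc1]
      simp only [zc, Sum.elim_inr, Sum.elim_inl]
    have hC2p : ∑ t ∈ U.image Prod.fst,
        (pc (Sum.inr (Sum.inr t))).eval (k:ℂ) * zc (Sum.inr (Sum.inr t)) ^ k
        = ∑ c ∈ U, (((a c : ℝ) : ℂ) + ((b c : ℝ) : ℂ) * Complex.I)/2 * (k:ℂ)^c.2 * zc2 c.1 ^ k := by
      rw [← Finset.sum_fiberwise_of_maps_to (g := Prod.fst)
          (fun x hx => Finset.mem_image_of_mem _ hx)
          (fun c => (((a c : ℝ) : ℂ) + ((b c : ℝ) : ℂ) * Complex.I)/2 * (k:ℂ)^c.2 * zc2 c.1 ^ k)]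
      apply Finset.sum_congr rfl
      intro t ht
      simp only [hpc, Sum.elim_inr, Polynomial.eval_finset_sum, eval_mul, eval_C,
        eval_pow, eval_X]
      rw [Finset.sum_mul]
      apply Finset.sum_congr rfl
      intro c hc
      have hc1 : c.1 = t := (Finset.mem_filter.mp hc).2
      rw [← hc1]
      simp only [zc, Sum.elim_inr]
    rw [hBp, hC1p, hC2p, ← Finset.sum_add_distrib]
    have hcomb : ∑ c ∈ U,
        ((((a c : ℝ) : ℂ) - ((b c : ℝ) : ℂ) * Complex.I)/2 * (k:ℂ)^c.2 * zc1 c.1 ^ k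
          + (((a c : ℝ) : ℂ) + ((b c : ℝ) : ℂ) * Complex.I)/2 * (k:ℂ)^c.2 * zc2 c.1 ^ k)
        = ((∑ c ∈ U, (a c * ((k:ℝ)^c.2 * (c.1.1:ℝ)^k * Real.cos (k * (c.1.2:ℝ)))
            + b c * ((k:ℝ)^c.2 * (c.1.1:ℝ)^k * Real.sin (k * (c.1.2:ℝ)))) : ℝ) : ℂ) := by
      rw [Complex.ofReal_sum]
      apply Finset.sum_congr rfl
      intro c hc
      have := combine (c.1.1 : ℝ) (c.1.2 : ℝ) (a c) (b c) c.2 k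
      rw [zc1, zc2]
      push_cast [-Complex.ofReal_cos, -Complex.ofReal_sin] at this ⊢
      linear_combination this
    rw [hcomb, ← Complex.ofReal_add, ← Complex.ofReal_zero]
    congr 1
    rw [Finset.sum_add_distrib]
    have := hF0 k hk
    linarith
  have hnz : ∀ j ∈ sJ, zc j ≠ 0 := fun j _ => zc_ne_zero j
  have hinj : Set.InjOn zc ↑sJ := zc_inj.injOn
  have hall := key (∑ j ∈ sJ, pdeg (pc j)) sJ zc pc N hnz hinj le_rfl hzsum
  have hgB : ∀ x ∈ s.toRight.toLeft, g (Sum.inr (Sum.inl x)) = 0 := by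
    intro x hx
    have hmem : (Sum.inl x.1 : Bsub ⊕ (Aty ⊕ Aty)) ∈ sJ := by
      rw [hsJ]; exact Finset.inl_mem_disjSum.mpr (Finset.mem_image_of_mem _ hx)
    have h := hall _ hmem
    simp only [hpc, Sum.elim_inl] at h
    have h2 := extract (s.toRight.toLeft.filter (fun y => y.1 = x.1))
      (fun y => ((g (Sum.inr (Sum.inl y)) : ℝ) : ℂ)) x
      (Finset.mem_filter.mpr ⟨hx, rfl⟩) (fun c hc => (Finset.mem_filter.mp hc).2) h
    have h3 : ((g (Sum.inr (Sum.inl x)) : ℝ) : ℂ) = 0 := h2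
    exact_mod_cast h3
  have hU0 : ∀ c ∈ U, a c = 0 ∧ b c = 0 := by
    intro c hc
    have hmem : (Sum.inr (Sum.inl c.1) : Bsub ⊕ (Aty ⊕ Aty)) ∈ sJ := by
      rw [hsJ]
      exact Finset.inr_mem_disjSum.mpr (Finset.inl_mem_disjSum.mpr (Finset.mem_image_of_mem _ hc))
    have h := hall _ hmem
    simp only [hpc, Sum.elim_inr, Sum.elim_inl] at h
    have h2 := extract (U.filter (fun d => d.1 = c.1))
      (fun y => ((((a y : ℝ) : ℂ) - ((b y : ℝ) : ℂ) * Complex.I)/2)) c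
      (Finset.mem_filter.mpr ⟨hc, rfl⟩) (fun d hd => (Finset.mem_filter.mp hd).2) h
    have h2' : ((((a c : ℝ) : ℂ) - ((b c : ℝ) : ℂ) * Complex.I)/2) = 0 := h2
    rw [_root_.div_eq_zero_iff] at h2'
    have h3 : ((a c : ℝ) : ℂ) - ((b c : ℝ) : ℂ) * Complex.I = 0 := h2'.resolve_right (by norm_num)
    constructor
    · have h4 := congrArg Complex.re h3; simpa using h4
    · have h4 := congrArg Complex.im h3; simpa using h4
  intro i hi
  rcases i with n | (x | (c | c))
  · have hx : n ∈ s.toLeft := Finset.mem_toLeft.mpr hi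
    have h := hpt n
    have hB0 : ∑ x ∈ s.toRight.toLeft, g (Sum.inr (Sum.inl x)) * ((n:ℝ)^x.2 * (x.1:ℝ)^n) = 0 :=
      Finset.sum_eq_zero fun x hx' => by rw [hgB x hx', zero_mul]
    have hc0 : ∑ c ∈ U, a c * ((n:ℝ)^c.2 * (c.1.1:ℝ)^n * Real.cos (n * (c.1.2:ℝ))) = 0 :=
      Finset.sum_eq_zero fun c hc => by rw [(hU0 c hc).1, zero_mul]
    have hs0 : ∑ c ∈ U, b c * ((n:ℝ)^c.2 * (c.1.1:ℝ)^n * Real.sin (n * (c.1.2:ℝ))) = 0 :=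
      Finset.sum_eq_zero fun c hc => by rw [(hU0 c hc).2, zero_mul]
    rw [hB0, hc0, hs0] at h
    have h2 : ∑ m ∈ s.toLeft, g (Sum.inl m) * (if n = m then (1:ℝ) else 0) = 0 := by linarith
    rw [Finset.sum_eq_single n (fun m _ hne => by simp [Ne.symm hne])
      (fun hnn => absurd hx hnn)] at h2
    simpa using h2
  · exact hgB x (Finset.mem_toLeft.mpr (Finset.mem_toRight.mpr hi))
  · have hcU : c ∈ U := by
      rw [hU]; exact Finset.mem_union_left _ ((hmem1 c).mpr hi)
    have h := (hU0 c hcU).1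
    rw [ha] at h; simp only at h
    rwa [if_pos hi] at h
  · have hcU : c ∈ U := by
      rw [hU]; exact Finset.mem_union_right _ ((hmem2 c).mpr hi)
    have h := (hU0 c hcU).2
    rw [hb] at h; simp only at h
    rwa [if_pos hi] at h

/-- The family of real sequences consisting of the delta sequences `δ_n`, the sequences
`k ↦ k^i ρ^k` (`ρ ≠ 0`), the sequences `k ↦ k^i r^k cos(kθ)` and `k ↦ k^i r^k sin(kθ)`
(`r > 0`, `0 < θ < π`) is linearly independent over `ℝ`. -/
theorem real_recurrence_basis_linearIndependent :
    LinearIndependent ℝ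
      (Sum.elim
        (fun nn : ℕ => fun k : ℕ => if k = nn then (1 : ℝ) else 0)
        (Sum.elim
          (fun q : {ρ : ℝ // ρ ≠ 0} × ℕ => fun k : ℕ =>
            (k : ℝ) ^ q.2 * (q.1 : ℝ) ^ k)
          (Sum.elim
            (fun q : ({r : ℝ // 0 < r} × {θ : ℝ // 0 < θ ∧ θ < Real.pi}) × ℕ => fun k : ℕ =>
              (k : ℝ) ^ q.2 * (q.1.1 : ℝ) ^ k * Real.cos (k * (q.1.2 : ℝ)))
            (fun q : ({r : ℝ // 0 < r} × {θ : ℝ // 0 < θ ∧ θ < Real.pi}) × ℕ => fun k : ℕ =>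
              (k : ℝ) ^ q.2 * (q.1.1 : ℝ) ^ k * Real.sin (k * (q.1.2 : ℝ)))))) := by
  rw [linearIndependent_iff']
  intro s g hsum
  exact aux_main s g hsum

end RecBasisAux
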